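/- Under the hypotheses of the Voronovskaja theorem with n such that m_j(φ) = 0 for 1 ≤ j ≤ n−1 and m_n(φ) ≠ 0 possibly, lim_{w→+∞} w^n [(S_w^φ f)(x) − f(x)] = (Θ^n f)(x) m_n(φ)/n! for f of class C^{(n)} locally at x. -/

import Mathlib

open Real Filter Asymptotics

/-- The generalized exponential sampling operator. -/
noncomputable def expSampling (φ f : ℝ → ℝ) (w x : ℝ) : ℝ :=
  ∑' k : ℤ, f (Real.exp (k / w)) * φ (Real.exp (-k) * x ^ w)

/-- The Mellin differential operator (with `c = 0`): `Θf(x) = x f'(x)`. -/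
noncomputable def mellinD (f : ℝ → ℝ) : ℝ → ℝ := fun x => x * deriv f x

/-- `f` is of class `C^{(n)}` locally at `x`: `f` is `(n-1)`-times differentiable in a
neighbourhood of `x` and the `n`-th derivative exists at `x`. -/
def LocallyCn (n : ℕ) (f : ℝ → ℝ) (x : ℝ) : Prop :=
  (∀ m < n - 1, ∀ᶠ y in nhds x, DifferentiableAt ℝ (iteratedDeriv m f) y) ∧
    DifferentiableAt ℝ (iteratedDeriv (n - 1) f) x



lemma deriv_comp_exp (g : ℝ → ℝ) (t : ℝ) :
    deriv (fun s => g (Real.exp s)) t = Real.exp t * deriv g (Real.exp t) := by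
  by_cases hg : DifferentiableAt ℝ g (Real.exp t)
  · have := deriv_comp (h₂ := g) (h := Real.exp) t hg (Real.differentiableAt_exp)
    simpa [Function.comp_def, Real.deriv_exp, mul_comm] using this
  · have h1 : ¬ DifferentiableAt ℝ (fun s => g (Real.exp s)) t := by
      intro h
      have hlog : DifferentiableAt ℝ Real.log (Real.exp t) :=
        Real.differentiableAt_log (Real.exp_pos t).ne'
      have hcomp : DifferentiableAt ℝ (fun y => g (Real.exp (Real.log y))) (Real.exp t) := by
        have h' : DifferentiableAt ℝ (fun s => g (Real.exp s)) (Real.log (Real.exp t)) := by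
          rwa [Real.log_exp]
        have := h'.comp (Real.exp t) hlog
        simpa [Function.comp_def] using this
      have heq : (fun y => g (Real.exp (Real.log y))) =ᶠ[nhds (Real.exp t)] g := by
        filter_upwards [eventually_gt_nhds (Real.exp_pos t)] with y hy
        rw [Real.exp_log hy]
      exact hg (heq.differentiableAt_iff.mp hcomp)
    rw [deriv_zero_of_not_differentiableAt h1, deriv_zero_of_not_differentiableAt hg, mul_zero]

lemma mellin_iter (f : ℝ → ℝ) (j : ℕ) (t : ℝ) :
    deriv^[j] (fun s => f (Real.exp s)) t = mellinD^[j] f (Real.exp t) := by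
  induction j generalizing t with
  | zero => simp
  | succ j ih =>
    rw [Function.iterate_succ_apply', Function.iterate_succ_apply']
    have h : deriv^[j] (fun s => f (Real.exp s)) = fun s => mellinD^[j] f (Real.exp s) :=
      funext fun s => ih s
    rw [h, deriv_comp_exp]
    rfl


/-- Stirling-like coefficients for iterates of the Mellin derivative. -/
def stCoeff : ℕ → ℕ → ℝ
  | 0, 0 => 1
  | 0, _ + 1 => 0
  | _ + 1, 0 => 0
  | j + 1, i + 1 => (i + 1) * stCoeff j (i + 1) + stCoeff j i

lemma stCoeff_zero_of_gt : ∀ j i : ℕ, j < i → stCoeff j i = 0 := by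
  intro j
  induction j with
  | zero => intro i hi; match i, hi with | i+1, _ => rfl
  | succ j ih =>
    intro i hi
    match i, hi with
    | i+1, hi =>
      have h1 : j < i + 1 := by omega
      have h2 : j < i := by omega
      rw [stCoeff, ih _ h1, ih _ h2, mul_zero, add_zero]

lemma stirling_rep (f : ℝ → ℝ) (U : Set ℝ) (hU : IsOpen U) (p : ℕ)
    (hdiff : ∀ y ∈ U, ∀ m, m < p → DifferentiableAt ℝ (deriv^[m] f) y) :
    ∀ j ≤ p, ∀ y ∈ U, mellinD^[j] f y =
      ∑ i ∈ Finset.range (j + 1), stCoeff j i * y ^ i * deriv^[i] f y := by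
  intro j
  induction j with
  | zero =>
    intro _ y _
    simp [stCoeff]
  | succ j ih =>
    intro hj y hy
    have hj' : j ≤ p := by omega
    -- derivatives available at points of U
    have hEq : mellinD^[j] f =ᶠ[nhds y]
        fun z => ∑ i ∈ Finset.range (j + 1), stCoeff j i * z ^ i * deriv^[i] f z := by
      filter_upwards [hU.mem_nhds hy] with z hz
      exact ih hj' z hz
    have hterm : ∀ i ∈ Finset.range (j + 1), HasDerivAt
        (fun z => stCoeff j i * z ^ i * deriv^[i] f z)
        (stCoeff j i * ((i : ℝ) * y ^ (i - 1)) * deriv^[i] f y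
          + stCoeff j i * y ^ i * deriv^[i + 1] f y) y := by
      intro i hi
      have hdi : DifferentiableAt ℝ (deriv^[i] f) y := by
        apply hdiff y hy
        simp only [Finset.mem_range] at hi
        omega
      have h1 : HasDerivAt (fun z : ℝ => stCoeff j i * z ^ i)
          (stCoeff j i * ((i : ℝ) * y ^ (i - 1))) y := (hasDerivAt_pow i y).const_mul _
      have h2 : HasDerivAt (deriv^[i] f) (deriv^[i + 1] f y) y := by
        rw [Function.iterate_succ_apply']
        exact hdi.hasDerivAt
      exact h1.mul h2
    have hderiv : deriv (mellinD^[j] f) y =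
        ∑ i ∈ Finset.range (j + 1),
          (stCoeff j i * ((i : ℝ) * y ^ (i - 1)) * deriv^[i] f y
            + stCoeff j i * y ^ i * deriv^[i + 1] f y) := by
      rw [hEq.deriv_eq]
      exact (HasDerivAt.fun_sum hterm).deriv
    rw [Function.iterate_succ_apply']
    show y * deriv (mellinD^[j] f) y = _
    rw [hderiv, Finset.mul_sum]
    -- algebraic reindexing
    have key : ∀ i ∈ Finset.range (j + 1),
        y * (stCoeff j i * ((i : ℝ) * y ^ (i - 1)) * deriv^[i] f y
          + stCoeff j i * y ^ i * deriv^[i + 1] f y)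
        = (i : ℝ) * stCoeff j i * y ^ i * deriv^[i] f y
          + stCoeff j i * y ^ (i + 1) * deriv^[i + 1] f y := by
      intro i _
      rcases i with _ | i
      · simp; ring
      · rw [Nat.add_sub_cancel]
        ring
    rw [Finset.sum_congr rfl key, Finset.sum_add_distrib]
    have e1 : ∑ i ∈ Finset.range (j + 1), (i : ℝ) * stCoeff j i * y ^ i * deriv^[i] f y
        = ∑ i ∈ Finset.range (j + 2), (i : ℝ) * stCoeff j i * y ^ i * deriv^[i] f y := by
      rw [Finset.sum_range_succ (n := j + 1)]
      rw [stCoeff_zero_of_gt j (j + 1) (by omega)]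
      simp
    have e2 : ∑ i ∈ Finset.range (j + 1), stCoeff j i * y ^ (i + 1) * deriv^[i + 1] f y
        = ∑ i ∈ Finset.range (j + 2),
            (if i = 0 then 0 else stCoeff j (i - 1)) * y ^ i * deriv^[i] f y := by
      rw [Finset.sum_range_succ' (fun i => (if i = 0 then 0 else stCoeff j (i - 1)) * y ^ i * deriv^[i] f y) (j + 1)]
      simp
    rw [e1, e2, ← Finset.sum_add_distrib]
    apply Finset.sum_congr rfl
    intro i hi
    rcases i with _ | i
    · simp [stCoeff]
    · simp only [Nat.add_sub_cancel, if_neg (Nat.succ_ne_zero i)]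
      rw [show stCoeff (j + 1) (i + 1) = (i + 1) * stCoeff j (i + 1) + stCoeff j i from rfl]
      push_cast
      ring

lemma finite_near (L : ℝ) : {k : ℤ | |(k : ℝ) - L| < 1}.Finite := by
  apply Set.Finite.subset (Set.finite_Icc (⌈L⌉ - 2) (⌈L⌉ + 2))
  intro k hk
  simp only [Set.mem_setOf_eq, abs_lt] at hk
  simp only [Set.mem_Icc]
  have h1 : (L : ℝ) ≤ (⌈L⌉ : ℝ) := Int.le_ceil L
  have h2 : ((⌈L⌉ : ℤ) : ℝ) < L + 1 := Int.ceil_lt_add_one L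
  constructor
  · have : ((⌈L⌉ - 2 : ℤ) : ℝ) < (k : ℝ) := by push_cast; linarith
    exact_mod_cast le_of_lt this
  · have : (k : ℝ) < ((⌈L⌉ + 2 : ℤ) : ℝ) := by push_cast; linarith
    exact_mod_cast le_of_lt this

lemma key_summable {φ : ℝ → ℝ} {n : ℕ} {u : ℝ}
    (hs : Summable fun k : ℤ => |φ (Real.exp (-k) * u)| * |(k : ℝ) - Real.log u| ^ n)
    (c : ℕ) (hc : c ≤ n) :
    Summable fun k : ℤ => |φ (Real.exp (-k) * u)| * |(k : ℝ) - Real.log u| ^ c := by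
  set a : ℤ → ℝ := fun k => |φ (Real.exp (-k) * u)| with ha
  set b : ℤ → ℝ := fun k => |(k : ℝ) - Real.log u| with hb
  set ind : ℤ → ℝ := fun k => if b k < 1 then a k * b k ^ c else 0 with hind
  have hindS : Summable ind := by
    apply summable_of_finite_support
    apply Set.Finite.subset (finite_near (Real.log u))
    intro k hk
    simp only [Function.mem_support, hind] at hk
    by_contra h
    simp only [Set.mem_setOf_eq] at h
    rw [if_neg] at hk
    · exact hk rfl
    · exact h
  have htot : Summable fun k => a k * b k ^ n + ind k := hs.add hindS
  apply Summable.of_nonneg_of_le _ _ htot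
  · intro k
    positivity
  · intro k
    by_cases hbk : b k < 1
    · have : ind k = a k * b k ^ c := if_pos hbk
      rw [← this]
      have : 0 ≤ a k * b k ^ n := by positivity
      linarith
    · push_neg at hbk
      have h1 : b k ^ c ≤ b k ^ n := pow_le_pow_right₀ hbk hc
      have h2 : a k * b k ^ c ≤ a k * b k ^ n :=
        mul_le_mul_of_nonneg_left h1 (abs_nonneg _)
      have h3 : 0 ≤ ind k := by
        rw [hind]; simp only [if_neg (not_lt.mpr hbk)]; exact le_refl 0
      linarith

lemma peano_taylor (p : ℕ) (F : ℝ → ℝ) (L : ℝ)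
    (h1 : ∀ j, j < p → ∀ᶠ t in nhds L, DifferentiableAt ℝ (deriv^[j] F) t)
    (h2 : DifferentiableAt ℝ (deriv^[p] F) L) :
    (fun s => F s - ∑ j ∈ Finset.range (p + 2),
        (s - L) ^ j / (j.factorial : ℝ) * deriv^[j] F L)
      =o[nhds L] fun s => (s - L) ^ (p + 1) := by
  induction p generalizing F with
  | zero =>
    have hF : HasDerivAt F (deriv F L) L := h2.hasDerivAt
    have := hasDerivAt_iff_isLittleO.mp hF
    refine (this.congr' ?_ ?_)
    · filter_upwards with s
      simp [Finset.sum_range_succ]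
      ring
    · filter_upwards with s
      simp
  | succ p ih =>
    set G := deriv F with hG
    have h1G : ∀ j, j < p → ∀ᶠ t in nhds L, DifferentiableAt ℝ (deriv^[j] G) t := by
      intro j hj
      have : deriv^[j] G = deriv^[j + 1] F := (Function.iterate_succ_apply deriv j F).symm
      rw [this]
      exact h1 (j + 1) (by omega)
    have h2G : DifferentiableAt ℝ (deriv^[p] G) L := by
      have : deriv^[p] G = deriv^[p + 1] F := (Function.iterate_succ_apply deriv p F).symm
      rw [this]; exact h2
    have hRG := ih G h1G h2G
    set RG := fun s => G s - ∑ j ∈ Finset.range (p + 2),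
        (s - L) ^ j / (j.factorial : ℝ) * deriv^[j] G L with hRGdef
    set R := fun s => F s - ∑ j ∈ Finset.range (p + 3),
        (s - L) ^ j / (j.factorial : ℝ) * deriv^[j] F L with hRdef
    have hRL : R L = 0 := by
      simp only [hRdef]
      rw [Finset.sum_eq_single_of_mem 0 (Finset.mem_range.mpr (by omega))]
      · simp
      · intro j _ hj
        rcases Nat.exists_eq_succ_of_ne_zero hj with ⟨i, rfl⟩
        simp
    have hRderiv : ∀ t, DifferentiableAt ℝ F t → HasDerivAt R (RG t) t := by
      intro t hFt
      have hQ : HasDerivAt (fun s => ∑ j ∈ Finset.range (p + 3),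
          (s - L) ^ j / (j.factorial : ℝ) * deriv^[j] F L)
          (∑ j ∈ Finset.range (p + 2),
            (t - L) ^ j / (j.factorial : ℝ) * deriv^[j] G L) t := by
        have hterm : ∀ j ∈ Finset.range (p + 3), HasDerivAt
            (fun s => (s - L) ^ j / (j.factorial : ℝ) * deriv^[j] F L)
            ((j : ℝ) * (t - L) ^ (j - 1) / (j.factorial : ℝ) * deriv^[j] F L) t := by
          intro j _
          have h1 : HasDerivAt (fun s : ℝ => s - L) 1 t := (hasDerivAt_id t).sub_const L
          have h2 : HasDerivAt (fun s : ℝ => (s - L) ^ j) ((j : ℝ) * (t - L) ^ (j - 1)) t := by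
            simpa using (HasDerivAt.fun_pow h1 j)
          simpa using (h2.div_const (j.factorial : ℝ)).mul_const (deriv^[j] F L)
        have := HasDerivAt.fun_sum hterm
        refine this.congr_deriv ?_
        symm
        rw [Finset.sum_range_succ' (fun j => (j : ℝ) * (t - L) ^ (j - 1) / (j.factorial : ℝ) * deriv^[j] F L) (p + 2)]
        simp only [Nat.cast_zero, zero_mul, Nat.factorial_zero, Nat.cast_one, zero_div,
          zero_mul, add_zero]
        apply Finset.sum_congr rfl
        intro j _
        have : deriv^[j] G L = deriv^[j + 1] F L := by
          rw [Function.iterate_succ_apply]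
        rw [this, Nat.add_sub_cancel, Nat.factorial_succ]
        have hjf : (j.factorial : ℝ) ≠ 0 := Nat.cast_ne_zero.mpr (Nat.factorial_ne_zero j)
        push_cast
        field_simp
      have : HasDerivAt R (deriv F t - ∑ j ∈ Finset.range (p + 2),
          (t - L) ^ j / (j.factorial : ℝ) * deriv^[j] G L) t := (hFt.hasDerivAt).sub hQ
      exact this
    rw [isLittleO_iff]
    intro ε hε
    have hev1 := isLittleO_iff.mp hRG hε
    have hev2 := h1 0 (by omega)
    simp only [Function.iterate_zero, id_eq] at hev2
    rcases Metric.eventually_nhds_iff.mp (hev1.and hev2) with ⟨δ, hδ, hball⟩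
    rw [Metric.eventually_nhds_iff]
    refine ⟨δ, hδ, ?_⟩
    intro s hs
    rw [Real.dist_eq] at hs
    -- work on the segment from L to s
    have hseg : ∀ t ∈ segment ℝ L s, |t - L| ≤ |s - L| := by
      intro t ht
      rcases ht with ⟨a, b, ha, hb, hab, rfl⟩
      have : a • L + b • s - L = b * (s - L) := by
        simp only [smul_eq_mul]
        have : a = 1 - b := by linarith
        rw [this]; ring
      rw [this, abs_mul, abs_of_nonneg hb]
      nlinarith [abs_nonneg (s - L)]
    have hsub : ∀ t ∈ segment ℝ L s, dist t L < δ := by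
      intro t ht
      rw [Real.dist_eq]
      exact lt_of_le_of_lt (hseg t ht) hs
    have hbound := Convex.norm_image_sub_le_of_norm_hasDerivWithin_le
      (f := R) (f' := RG) (s := segment ℝ L s) (C := ε * |s - L| ^ (p + 1))
      (fun t ht => ((hRderiv t (hball (hsub t ht)).2).hasDerivWithinAt))
      (fun t ht => by
        have h := (hball (hsub t ht)).1
        rw [Real.norm_eq_abs] at h ⊢
        calc |RG t| ≤ ε * |(t - L) ^ (p + 1)| := h
          _ = ε * |t - L| ^ (p + 1) := by rw [abs_pow]
          _ ≤ ε * |s - L| ^ (p + 1) := by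
              apply mul_le_mul_of_nonneg_left _ hε.le
              exact pow_le_pow_left₀ (abs_nonneg _) (hseg t ht) _)
      (convex_segment L s) (left_mem_segment ℝ L s) (right_mem_segment ℝ L s)
    rw [hRL, sub_zero] at hbound
    rw [Real.norm_eq_abs, Real.norm_eq_abs] at hbound ⊢
    calc |R s| ≤ ε * |s - L| ^ (p + 1) * |s - L| := hbound
      _ = ε * |s - L| ^ (p + 2) := by ring
      _ = ε * |(s - L) ^ (p + 2)| := by rw [abs_pow]

/-- Pointwise asymptotic formula when the intermediate moments vanish. -/
theorem voronovskaja_corollary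
    (φ f : ℝ → ℝ) (n : ℕ) (hn : 1 ≤ n) (m : ℕ → ℝ)
    (hφcont : ContinuousOn φ (Set.Ioi (0:ℝ)))
    (hpart : ∀ u : ℝ, 0 < u → ∑' k : ℤ, φ (Real.exp (-k) * u) = 1)
    (hsum : ∀ u : ℝ, 0 < u →
      Summable fun k : ℤ => |φ (Real.exp (-k) * u)| * |(k : ℝ) - Real.log u| ^ n)
    (hmom : ∀ j ≤ n, ∀ x : ℝ, 0 < x →
      ∑' k : ℤ, φ (Real.exp (-k) * x) * ((k : ℝ) - Real.log x) ^ j = m j)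
    (hMn : ∃ M : ℝ, ∀ u : ℝ, 0 < u →
      ∑' k : ℤ, |φ (Real.exp (-k) * u)| * |(k : ℝ) - Real.log u| ^ n ≤ M)
    (htail : ∀ ε > (0:ℝ), ∃ r₀ : ℝ, ∀ r ≥ r₀, ∀ u : ℝ, 0 < u →
      ∑' k : {k : ℤ // r < |(k : ℝ) - Real.log u|},
        |φ (Real.exp (-(k:ℤ)) * u)| * |((k:ℤ) : ℝ) - Real.log u| ^ n < ε)
    (hm0 : ∀ j, 1 ≤ j → j ≤ n - 1 → m j = 0)
    (hfbd : ∃ B : ℝ, ∀ x : ℝ, 0 < x → |f x| ≤ B)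
    (hfcont : ContinuousOn f (Set.Ioi (0:ℝ)))
    (x : ℝ) (hx : 0 < x) (hf : LocallyCn n f x) :
    Tendsto (fun w : ℝ => w ^ n * (expSampling φ f w x - f x)) atTop
      (nhds (mellinD^[n] f x / (Nat.factorial n) * m n)) := by
  classical
  obtain ⟨B₀, hB₀⟩ := hfbd
  obtain ⟨M₀, hM₀⟩ := hMn
  set B : ℝ := max B₀ 0 with hBdef
  have hBnn : 0 ≤ B := le_max_right _ _
  have hB : ∀ y : ℝ, 0 < y → |f y| ≤ B := fun y hy => (hB₀ y hy).trans (le_max_left _ _)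
  set M : ℝ := max M₀ 0 with hMdef
  have hMnn : 0 ≤ M := le_max_right _ _
  have hM : ∀ u : ℝ, 0 < u →
      ∑' k : ℤ, |φ (Real.exp (-k) * u)| * |(k : ℝ) - Real.log u| ^ n ≤ M :=
    fun u hu => (hM₀ u hu).trans (le_max_left _ _)
  set L : ℝ := Real.log x with hLdef
  have hexpL : Real.exp L = x := Real.exp_log hx
  set F : ℝ → ℝ := fun t => f (Real.exp t) with hFdef
  have hFL : F L = f x := by rw [hFdef]; simp only; rw [hexpL]
  -- neighbourhood on which the lower derivatives of f are differentiable
  have hev : ∀ᶠ y in nhds x, 0 < y ∧ ∀ m', m' < n - 1 →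
      DifferentiableAt ℝ (deriv^[m'] f) y := by
    have h0 : ∀ᶠ y in nhds x, 0 < y := eventually_gt_nhds hx
    have h1 : ∀ᶠ y in nhds x, ∀ m' ∈ Finset.range (n - 1),
        DifferentiableAt ℝ (deriv^[m'] f) y := by
      rw [eventually_all_finset]
      intro m' hm'
      have := hf.1 m' (Finset.mem_range.mp hm')
      simpa [iteratedDeriv_eq_iterate] using this
    filter_upwards [h0, h1] with y hy0 hy1
    exact ⟨hy0, fun m' hm' => hy1 m' (Finset.mem_range.mpr hm')⟩
  rcases eventually_nhds_iff.mp hev with ⟨U, hUprop, hUopen, hxU⟩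
  have hst := stirling_rep f U hUopen (n - 1) (fun y hy m' hm' => (hUprop y hy).2 m' hm')
  -- differentiability of iterates of deriv on F
  have hdiffF : ∀ j, j ≤ n - 1 → ∀ t, Real.exp t ∈ U →
      (∀ i, i ≤ j → DifferentiableAt ℝ (deriv^[i] f) (Real.exp t)) →
      DifferentiableAt ℝ (deriv^[j] F) t := by
    intro j hj t ht hdi
    have heq : deriv^[j] F =ᶠ[nhds t] fun s =>
        ∑ i ∈ Finset.range (j + 1), stCoeff j i * (Real.exp s) ^ i *
          deriv^[i] f (Real.exp s) := by
      have hUs : ∀ᶠ s in nhds t, Real.exp s ∈ U :=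
        Real.continuous_exp.continuousAt.eventually_mem (hUopen.mem_nhds ht)
      filter_upwards [hUs] with s hs
      rw [hFdef, mellin_iter f j s]
      exact hst j hj _ hs
    rw [heq.differentiableAt_iff]
    apply DifferentiableAt.fun_sum
    intro i hi
    have h1 : DifferentiableAt ℝ (fun s : ℝ => (Real.exp s) ^ i) t :=
      (Real.differentiable_exp.differentiableAt).pow i
    have h2 : DifferentiableAt ℝ (fun s : ℝ => deriv^[i] f (Real.exp s)) t := by
      have := (hdi i (Nat.lt_succ_iff.mp (Finset.mem_range.mp hi))).comp t
        (Real.differentiable_exp.differentiableAt)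
      simpa [Function.comp_def] using this
    exact (h1.const_mul _).mul h2
  have hUL : Real.exp L ∈ U := by rw [hexpL]; exact hxU
  have h1F : ∀ j, j < n - 1 → ∀ᶠ t in nhds L, DifferentiableAt ℝ (deriv^[j] F) t := by
    intro j hj
    have hUs : ∀ᶠ t in nhds L, Real.exp t ∈ U :=
      Real.continuous_exp.continuousAt.eventually_mem (hUopen.mem_nhds hUL)
    filter_upwards [hUs] with t ht
    exact hdiffF j (le_of_lt hj) t ht (fun i hi => (hUprop _ ht).2 i (by omega))
  have h2F : DifferentiableAt ℝ (deriv^[n - 1] F) L := by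
    apply hdiffF (n - 1) le_rfl L hUL
    intro i hi
    rcases lt_or_eq_of_le hi with h | h
    · rw [hexpL]; exact (hUprop x hxU).2 i h
    · rw [hexpL, h]
      have := hf.2
      rwa [iteratedDeriv_eq_iterate] at this
  -- the Peano remainder
  set E : ℝ → ℝ := fun s => F s - ∑ j ∈ Finset.range (n + 1),
      (s - L) ^ j / (j.factorial : ℝ) * deriv^[j] F L with hEdef
  have hpe : E =o[nhds L] fun s => (s - L) ^ n := by
    have h := peano_taylor (n - 1) F L h1F h2F
    rw [show n - 1 + 2 = n + 1 by omega, show n - 1 + 1 = n by omega] at h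
    exact h.congr' (Filter.EventuallyEq.of_eq hEdef.symm) Filter.EventuallyEq.rfl
  -- basic facts about the kernel sums
  have hxw : ∀ w : ℝ, 0 < x ^ w := fun w => Real.rpow_pos_of_pos hx w
  have hlogxw : ∀ w : ℝ, Real.log (x ^ w) = w * L := fun w => Real.log_rpow hx w
  have habs : ∀ w : ℝ, Summable fun k : ℤ =>
      |φ (Real.exp (-k) * x ^ w)| * |(k : ℝ) - w * L| ^ n := by
    intro w
    have := hsum (x ^ w) (hxw w)
    rwa [hlogxw w] at this
  have hSc : ∀ w : ℝ, ∀ c, c ≤ n → Summable fun k : ℤ =>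
      |φ (Real.exp (-k) * x ^ w)| * |(k : ℝ) - w * L| ^ c := by
    intro w c hc
    have := key_summable (hsum (x ^ w) (hxw w)) c hc
    rwa [hlogxw w] at this
  have hSaabs : ∀ w : ℝ, Summable fun k : ℤ => |φ (Real.exp (-k) * x ^ w)| := by
    intro w
    have := hSc w 0 (Nat.zero_le n)
    simpa using this
  have hSa : ∀ w : ℝ, Summable fun k : ℤ => φ (Real.exp (-k) * x ^ w) :=
    fun w => (hSaabs w).of_abs
  have hSpow : ∀ w : ℝ, ∀ c, c ≤ n → Summable fun k : ℤ =>
      φ (Real.exp (-k) * x ^ w) * ((k : ℝ) - w * L) ^ c := by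
    intro w c hc
    apply Summable.of_abs
    apply (hSc w c hc).congr
    intro k
    rw [abs_mul, abs_pow]
  have hMw : ∀ w : ℝ, ∑' k : ℤ,
      |φ (Real.exp (-k) * x ^ w)| * |(k : ℝ) - w * L| ^ n ≤ M := by
    intro w
    have := hM (x ^ w) (hxw w)
    rwa [hlogxw w] at this
  have hmom' : ∀ j, j ≤ n → ∀ w : ℝ, ∑' k : ℤ,
      φ (Real.exp (-k) * x ^ w) * ((k : ℝ) - w * L) ^ j = m j := by
    intro j hj w
    have := hmom j hj (x ^ w) (hxw w)
    rwa [hlogxw w] at this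
  have hpart' : ∀ w : ℝ, ∑' k : ℤ, φ (Real.exp (-k) * x ^ w) = 1 :=
    fun w => hpart (x ^ w) (hxw w)
  have hFb : ∀ s : ℝ, |F s| ≤ B := by
    intro s
    rw [hFdef]
    exact hB _ (Real.exp_pos s)
  have hFaS : ∀ w : ℝ, Summable fun k : ℤ =>
      F ((k : ℝ) / w) * φ (Real.exp (-k) * x ^ w) := by
    intro w
    apply Summable.of_abs
    apply Summable.of_nonneg_of_le (fun k => abs_nonneg _)
      (fun k => ?_) ((hSaabs w).mul_left B)
    rw [abs_mul]
    exact mul_le_mul_of_nonneg_right (hFb _) (abs_nonneg _)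
  -- decomposition of the summand, for w > 0
  have hdecomp : ∀ w : ℝ, 0 < w → ∀ k : ℤ,
      (F ((k : ℝ) / w) - F L) * φ (Real.exp (-k) * x ^ w)
      = E ((k : ℝ) / w) * φ (Real.exp (-k) * x ^ w)
        + ∑ i ∈ Finset.range n, (φ (Real.exp (-k) * x ^ w) * ((k : ℝ) - w * L) ^ (i + 1))
            * ((w⁻¹) ^ (i + 1) / (((i + 1).factorial : ℝ)) * deriv^[i + 1] F L) := by
    intro w hw k
    have hw' : w ≠ 0 := ne_of_gt hw
    have hq : (k : ℝ) / w - L = ((k : ℝ) - w * L) * w⁻¹ := by field_simp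
    have hsplit : ∑ j ∈ Finset.range (n + 1),
        ((k : ℝ) / w - L) ^ j / (j.factorial : ℝ) * deriv^[j] F L
        = (∑ i ∈ Finset.range n,
            ((k : ℝ) - w * L) ^ (i + 1) * (w⁻¹) ^ (i + 1) / (((i + 1).factorial : ℝ))
              * deriv^[i + 1] F L) + F L := by
      rw [Finset.sum_range_succ'
        (fun j => ((k : ℝ) / w - L) ^ j / (j.factorial : ℝ) * deriv^[j] F L) n]
      congr 1
      · apply Finset.sum_congr rfl
        intro i _
        rw [hq, mul_pow]
      · simp
    have hEval : E ((k : ℝ) / w) = F ((k : ℝ) / w) - ∑ j ∈ Finset.range (n + 1),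
        ((k : ℝ) / w - L) ^ j / (j.factorial : ℝ) * deriv^[j] F L := by rw [hEdef]
    have : F ((k : ℝ) / w) - F L = E ((k : ℝ) / w)
        + ∑ i ∈ Finset.range n,
            ((k : ℝ) - w * L) ^ (i + 1) * (w⁻¹) ^ (i + 1) / (((i + 1).factorial : ℝ))
              * deriv^[i + 1] F L := by
      rw [hEval, hsplit]; ring
    rw [this, add_mul, Finset.sum_mul]
    congr 1
    apply Finset.sum_congr rfl
    intro i _
    ring
  have hEsum : ∀ w : ℝ, 0 < w → Summable fun k : ℤ =>
      E ((k : ℝ) / w) * φ (Real.exp (-k) * x ^ w) := by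
    intro w hw
    have hFLa : Summable fun k : ℤ =>
        (F ((k : ℝ) / w) - F L) * φ (Real.exp (-k) * x ^ w) := by
      apply ((hFaS w).sub ((hSa w).mul_left (F L))).congr
      intro k
      ring
    have hterms : ∀ i ∈ Finset.range n, Summable fun k : ℤ =>
        (φ (Real.exp (-k) * x ^ w) * ((k : ℝ) - w * L) ^ (i + 1))
          * ((w⁻¹) ^ (i + 1) / (((i + 1).factorial : ℝ)) * deriv^[i + 1] F L) :=
      fun i hi => (hSpow w (i + 1) (Finset.mem_range.mp hi)).mul_right _
    apply (hFLa.sub (summable_sum hterms)).congr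
    intro k
    have h := hdecomp w hw k
    linarith
  -- the main algebraic identity, for w > 0
  have hmain : ∀ w : ℝ, 0 < w →
      w ^ n * (expSampling φ f w x - f x)
      = deriv^[n] F L / (n.factorial : ℝ) * m n
        + w ^ n * ∑' k : ℤ, E ((k : ℝ) / w) * φ (Real.exp (-k) * x ^ w) := by
    intro w hw
    have hw' : w ≠ 0 := ne_of_gt hw
    have hexpand : expSampling φ f w x
        = ∑' k : ℤ, F ((k : ℝ) / w) * φ (Real.exp (-k) * x ^ w) :=
      tsum_congr (fun k => by rw [hFdef])
    have h1 : (∑' k : ℤ, F ((k : ℝ) / w) * φ (Real.exp (-k) * x ^ w)) - f x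
        = ∑' k : ℤ, (F ((k : ℝ) / w) - F L) * φ (Real.exp (-k) * x ^ w) := by
      have hptw : ∀ k : ℤ, (F ((k : ℝ) / w) - F L) * φ (Real.exp (-k) * x ^ w)
          = F ((k : ℝ) / w) * φ (Real.exp (-k) * x ^ w)
            - F L * φ (Real.exp (-k) * x ^ w) := fun k => by ring
      rw [tsum_congr hptw, Summable.tsum_sub (hFaS w) ((hSa w).mul_left (F L)), tsum_mul_left,
        hpart' w, mul_one, hFL]
    have hterms : ∀ i ∈ Finset.range n, Summable fun k : ℤ =>
        (φ (Real.exp (-k) * x ^ w) * ((k : ℝ) - w * L) ^ (i + 1))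
          * ((w⁻¹) ^ (i + 1) / (((i + 1).factorial : ℝ)) * deriv^[i + 1] F L) :=
      fun i hi => (hSpow w (i + 1) (Finset.mem_range.mp hi)).mul_right _
    have h2 : ∑' k : ℤ, (F ((k : ℝ) / w) - F L) * φ (Real.exp (-k) * x ^ w)
        = (∑' k : ℤ, E ((k : ℝ) / w) * φ (Real.exp (-k) * x ^ w))
          + ∑ i ∈ Finset.range n,
              m (i + 1) * ((w⁻¹) ^ (i + 1) / (((i + 1).factorial : ℝ)) * deriv^[i + 1] F L) := by
      rw [tsum_congr (hdecomp w hw), Summable.tsum_add (hEsum w hw) (summable_sum hterms)]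
      congr 1
      rw [Summable.tsum_finsetSum hterms]
      apply Finset.sum_congr rfl
      intro i hi
      rw [tsum_mul_right, hmom' (i + 1) (Finset.mem_range.mp hi) w]
    have h3 : ∑ i ∈ Finset.range n,
        m (i + 1) * ((w⁻¹) ^ (i + 1) / (((i + 1).factorial : ℝ)) * deriv^[i + 1] F L)
        = m n * ((w⁻¹) ^ n / ((n.factorial : ℝ)) * deriv^[n] F L) := by
      rw [Finset.sum_eq_single_of_mem (n - 1) (Finset.mem_range.mpr (by omega))]
      · rw [show n - 1 + 1 = n by omega]
      · intro i hi hne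
        rw [hm0 (i + 1) (by omega) (by have := Finset.mem_range.mp hi; omega), zero_mul]
    have hcancel : w ^ n * (w⁻¹) ^ n = 1 := by
      rw [← mul_pow, mul_inv_cancel₀ hw', one_pow]
    rw [hexpand, h1, h2, h3, mul_add]
    rw [show w ^ n * (m n * ((w⁻¹) ^ n / ((n.factorial : ℝ)) * deriv^[n] F L))
        = (w ^ n * (w⁻¹) ^ n) * (m n * (deriv^[n] F L / ((n.factorial : ℝ)))) by ring,
      hcancel, one_mul]
    ring
  -- the remainder tends to zero
  have hEfar : ∀ γ : ℝ, 0 < γ → γ ≤ 1 → ∀ s : ℝ, γ ≤ |s - L| →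
      |E s| ≤ (B + ∑ j ∈ Finset.range (n + 1), |deriv^[j] F L| / (j.factorial : ℝ)) / γ ^ n
        * |s - L| ^ n := by
    intro γ hγ hγ1 s hsγ
    have hγn : (0:ℝ) < γ ^ n := pow_pos hγ n
    have hX1 : (1:ℝ) ≤ |s - L| ^ n / γ ^ n := by
      rw [le_div_iff₀ hγn, one_mul]
      exact pow_le_pow_left₀ hγ.le hsγ n
    have hEb : |E s| ≤ B + ∑ j ∈ Finset.range (n + 1),
        |s - L| ^ j / (j.factorial : ℝ) * |deriv^[j] F L| := by
      rw [hEdef]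
      refine (abs_sub _ _).trans ?_
      gcongr
      · exact hFb s
      · refine (Finset.abs_sum_le_sum_abs _ _).trans ?_
        apply le_of_eq
        apply Finset.sum_congr rfl
        intro j _
        rw [abs_mul, abs_div, abs_pow, Nat.abs_cast]
    refine hEb.trans ?_
    have hterm : ∀ j ∈ Finset.range (n + 1),
        |s - L| ^ j / (j.factorial : ℝ) * |deriv^[j] F L|
        ≤ (|deriv^[j] F L| / (j.factorial : ℝ)) * (|s - L| ^ n / γ ^ n) := by
      intro j hj
      have hjn : j ≤ n := Nat.lt_succ_iff.mp (Finset.mem_range.mp hj)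
      have hpow : |s - L| ^ j ≤ |s - L| ^ n / γ ^ n := by
        rw [le_div_iff₀ hγn]
        calc |s - L| ^ j * γ ^ n ≤ |s - L| ^ j * γ ^ (n - j) := by
              apply mul_le_mul_of_nonneg_left _ (pow_nonneg (abs_nonneg _) j)
              exact pow_le_pow_of_le_one hγ.le hγ1 (by omega)
          _ ≤ |s - L| ^ j * |s - L| ^ (n - j) := by
              apply mul_le_mul_of_nonneg_left _ (pow_nonneg (abs_nonneg _) j)
              exact pow_le_pow_left₀ hγ.le hsγ _
          _ = |s - L| ^ n := by rw [← pow_add]; congr 1; omega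
      calc |s - L| ^ j / (j.factorial : ℝ) * |deriv^[j] F L|
          = |s - L| ^ j * (|deriv^[j] F L| / (j.factorial : ℝ)) := by ring
        _ ≤ (|s - L| ^ n / γ ^ n) * (|deriv^[j] F L| / (j.factorial : ℝ)) := by
            apply mul_le_mul_of_nonneg_right hpow
            positivity
        _ = (|deriv^[j] F L| / (j.factorial : ℝ)) * (|s - L| ^ n / γ ^ n) := by ring
    calc B + ∑ j ∈ Finset.range (n + 1), |s - L| ^ j / (j.factorial : ℝ) * |deriv^[j] F L|
        ≤ B * (|s - L| ^ n / γ ^ n) + ∑ j ∈ Finset.range (n + 1),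
            (|deriv^[j] F L| / (j.factorial : ℝ)) * (|s - L| ^ n / γ ^ n) := by
          apply add_le_add
          · exact le_mul_of_one_le_right hBnn hX1
          · exact Finset.sum_le_sum hterm
      _ = (B + ∑ j ∈ Finset.range (n + 1), |deriv^[j] F L| / (j.factorial : ℝ)) / γ ^ n
            * |s - L| ^ n := by
          rw [← Finset.sum_mul]
          field_simp
  have hρ : Tendsto (fun w : ℝ =>
      w ^ n * ∑' k : ℤ, E ((k : ℝ) / w) * φ (Real.exp (-k) * x ^ w)) atTop (nhds 0) := by
    rw [NormedAddCommGroup.tendsto_nhds_zero]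
    intro ε hε
    set Cs : ℝ := ∑ j ∈ Finset.range (n + 1), |deriv^[j] F L| / (j.factorial : ℝ) with hCsdef
    have hCsnn : 0 ≤ Cs := Finset.sum_nonneg (fun j _ => by positivity)
    set δ : ℝ := ε / (2 * (M + 1)) with hδdef
    have hδ : 0 < δ := by positivity
    have hpe' := isLittleO_iff.mp hpe hδ
    rcases Metric.eventually_nhds_iff.mp hpe' with ⟨γ₀, hγ₀, hnear⟩
    set γ : ℝ := min (γ₀ / 2) 1 with hγdef
    have hγpos : 0 < γ := lt_min (by linarith) one_pos
    have hγ1 : γ ≤ 1 := min_le_right _ _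
    have hγlt : γ < γ₀ := lt_of_le_of_lt (min_le_left _ _) (by linarith)
    set C : ℝ := (B + Cs) / γ ^ n with hCdef
    have hCnn : 0 ≤ C := by positivity
    set ε' : ℝ := ε / (2 * (C + 1)) with hε'def
    have hε'pos : 0 < ε' := by positivity
    obtain ⟨r₀, hr₀⟩ := htail ε' hε'pos
    filter_upwards [eventually_ge_atTop (max 1 ((|r₀| + 1) / γ))] with w hwge
    have hw1 : 1 ≤ w := le_trans (le_max_left _ _) hwge
    have hw : 0 < w := lt_of_lt_of_le one_pos hw1
    have hw' : w ≠ 0 := ne_of_gt hw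
    have hwn : (0:ℝ) < w ^ n := pow_pos hw n
    have hγw : r₀ ≤ γ * w := by
      have h1 : (|r₀| + 1) / γ ≤ w := le_trans (le_max_right _ _) hwge
      have h2 : |r₀| + 1 ≤ w * γ := (div_le_iff₀ hγpos).mp h1
      calc r₀ ≤ |r₀| := le_abs_self r₀
        _ ≤ |r₀| + 1 := by linarith
        _ ≤ w * γ := h2
        _ = γ * w := mul_comm _ _
    set S : Set ℤ := {k : ℤ | γ * w < |(k : ℝ) - w * L|} with hSdef
    have hEabs : Summable fun k : ℤ =>
        |E ((k : ℝ) / w) * φ (Real.exp (-k) * x ^ w)| :=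
      summable_abs_iff.mpr (hEsum w hw)
    have hkey : ∀ k : ℤ, |(k : ℝ) / w - L| = |(k : ℝ) - w * L| / w := by
      intro k
      rw [show (k : ℝ) / w - L = ((k : ℝ) - w * L) / w by field_simp,
        abs_div, abs_of_pos hw]
    have hpowkey : ∀ k : ℤ, w ^ n * (|(k : ℝ) - w * L| / w) ^ n = |(k : ℝ) - w * L| ^ n := by
      intro k
      rw [div_pow]
      rw [mul_div_cancel₀ _ (pow_ne_zero n hw')]
    have hfar : ∀ k : ℤ, k ∈ S →
        w ^ n * |E ((k : ℝ) / w) * φ (Real.exp (-k) * x ^ w)|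
        ≤ C * (|φ (Real.exp (-k) * x ^ w)| * |(k : ℝ) - w * L| ^ n) := by
      intro k hk
      have hk' : γ * w < |(k : ℝ) - w * L| := hk
      have hγle : γ ≤ |(k : ℝ) / w - L| := by
        rw [hkey k]
        rw [le_div_iff₀ hw]
        exact le_of_lt hk'
      have hE := hEfar γ hγpos hγ1 ((k : ℝ) / w) hγle
      rw [← hCdef] at hE
      rw [abs_mul]
      calc w ^ n * (|E ((k : ℝ) / w)| * |φ (Real.exp (-k) * x ^ w)|)
          ≤ w ^ n * ((C * |(k : ℝ) / w - L| ^ n) * |φ (Real.exp (-k) * x ^ w)|) := by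
            apply mul_le_mul_of_nonneg_left _ (le_of_lt hwn)
            exact mul_le_mul_of_nonneg_right hE (abs_nonneg _)
        _ = C * (|φ (Real.exp (-k) * x ^ w)| * (w ^ n * |(k : ℝ) / w - L| ^ n)) := by ring
        _ = C * (|φ (Real.exp (-k) * x ^ w)| * |(k : ℝ) - w * L| ^ n) := by
            rw [hkey k, hpowkey k]
    have hnearb : ∀ k : ℤ, k ∉ S →
        w ^ n * |E ((k : ℝ) / w) * φ (Real.exp (-k) * x ^ w)|
        ≤ δ * (|φ (Real.exp (-k) * x ^ w)| * |(k : ℝ) - w * L| ^ n) := by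
      intro k hk
      have hk' : |(k : ℝ) - w * L| ≤ γ * w := le_of_not_gt hk
      have hdist : dist ((k : ℝ) / w) L < γ₀ := by
        rw [Real.dist_eq, hkey k]
        calc |(k : ℝ) - w * L| / w ≤ γ * w / w := by
              gcongr
          _ = γ := by field_simp
          _ < γ₀ := hγlt
      have hE := hnear hdist
      rw [Real.norm_eq_abs, Real.norm_eq_abs, abs_pow] at hE
      rw [abs_mul]
      calc w ^ n * (|E ((k : ℝ) / w)| * |φ (Real.exp (-k) * x ^ w)|)
          ≤ w ^ n * ((δ * |(k : ℝ) / w - L| ^ n) * |φ (Real.exp (-k) * x ^ w)|) := by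
            apply mul_le_mul_of_nonneg_left _ (le_of_lt hwn)
            exact mul_le_mul_of_nonneg_right hE (abs_nonneg _)
        _ = δ * (|φ (Real.exp (-k) * x ^ w)| * (w ^ n * |(k : ℝ) / w - L| ^ n)) := by ring
        _ = δ * (|φ (Real.exp (-k) * x ^ w)| * |(k : ℝ) - w * L| ^ n) := by
            rw [hkey k, hpowkey k]
    -- the tail sum over S
    have htl : ∑' k : ↑S, |φ (Real.exp (-(k : ℤ)) * x ^ w)|
        * |((k : ℤ) : ℝ) - w * L| ^ n < ε' := by
      have := hr₀ (γ * w) hγw (x ^ w) (hxw w)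
      rw [hlogxw w] at this
      exact this
    have hfar_sum : w ^ n * ∑' k : ↑S, |E (((k : ℤ) : ℝ) / w) * φ (Real.exp (-(k : ℤ)) * x ^ w)|
        ≤ C * ε' := by
      rw [← tsum_mul_left]
      calc ∑' k : ↑S, w ^ n * |E (((k : ℤ) : ℝ) / w) * φ (Real.exp (-(k : ℤ)) * x ^ w)|
          ≤ ∑' k : ↑S, C * (|φ (Real.exp (-(k : ℤ)) * x ^ w)| * |((k : ℤ) : ℝ) - w * L| ^ n) := by
            apply Summable.tsum_le_tsum (fun k : ↑S => hfar k.1 k.2)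
            · exact ((hEabs.mul_left (w ^ n)).subtype S)
            · exact (((habs w).mul_left C).subtype S)
        _ = C * ∑' k : ↑S, |φ (Real.exp (-(k : ℤ)) * x ^ w)| * |((k : ℤ) : ℝ) - w * L| ^ n := by
            rw [tsum_mul_left]
        _ ≤ C * ε' := mul_le_mul_of_nonneg_left (le_of_lt htl) hCnn
    have hnear_sum : w ^ n * ∑' k : ↑Sᶜ,
        |E (((k : ℤ) : ℝ) / w) * φ (Real.exp (-(k : ℤ)) * x ^ w)| ≤ δ * M := by
      rw [← tsum_mul_left]
      calc ∑' k : ↑Sᶜ, w ^ n * |E (((k : ℤ) : ℝ) / w) * φ (Real.exp (-(k : ℤ)) * x ^ w)|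
          ≤ ∑' k : ↑Sᶜ, δ * (|φ (Real.exp (-(k : ℤ)) * x ^ w)| * |((k : ℤ) : ℝ) - w * L| ^ n) := by
            apply Summable.tsum_le_tsum (fun k : ↑Sᶜ => hnearb k.1 k.2)
            · exact ((hEabs.mul_left (w ^ n)).subtype Sᶜ)
            · exact (((habs w).mul_left δ).subtype Sᶜ)
        _ = δ * ∑' k : ↑Sᶜ, |φ (Real.exp (-(k : ℤ)) * x ^ w)| * |((k : ℤ) : ℝ) - w * L| ^ n := by
            rw [tsum_mul_left]
        _ ≤ δ * ∑' k : ℤ, |φ (Real.exp (-k) * x ^ w)| * |(k : ℝ) - w * L| ^ n := by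
            apply mul_le_mul_of_nonneg_left _ (le_of_lt hδ)
            exact Summable.tsum_subtype_le _ _ (fun k => by positivity) (habs w)
        _ ≤ δ * M := mul_le_mul_of_nonneg_left (hMw w) (le_of_lt hδ)
    have hsplit : (∑' k : ↑S, |E (((k : ℤ) : ℝ) / w) * φ (Real.exp (-(k : ℤ)) * x ^ w)|)
        + (∑' k : ↑Sᶜ, |E (((k : ℤ) : ℝ) / w) * φ (Real.exp (-(k : ℤ)) * x ^ w)|)
        = ∑' k : ℤ, |E ((k : ℝ) / w) * φ (Real.exp (-k) * x ^ w)| :=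
      Summable.tsum_subtype_add_tsum_subtype_compl hEabs S
    have hCε : C * ε' < ε / 2 := by
      have hne : (C + 1) ≠ 0 := by positivity
      have h2 : ε' * (C + 1) = ε / 2 := by
        rw [hε'def]
        field_simp
      rw [mul_add, mul_one] at h2
      linarith
    have hδM : δ * M ≤ ε / 2 := by
      have hne : (M + 1) ≠ 0 := by positivity
      have h2 : δ * (M + 1) = ε / 2 := by
        rw [hδdef]
        field_simp
      rw [mul_add, mul_one] at h2
      linarith
    calc ‖w ^ n * ∑' k : ℤ, E ((k : ℝ) / w) * φ (Real.exp (-k) * x ^ w)‖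
        = w ^ n * ‖∑' k : ℤ, E ((k : ℝ) / w) * φ (Real.exp (-k) * x ^ w)‖ := by
          rw [norm_mul, Real.norm_eq_abs (w ^ n), abs_of_pos hwn]
      _ ≤ w ^ n * ∑' k : ℤ, |E ((k : ℝ) / w) * φ (Real.exp (-k) * x ^ w)| := by
          apply mul_le_mul_of_nonneg_left _ (le_of_lt hwn)
          have h1 : Summable fun k : ℤ =>
              ‖E ((k : ℝ) / w) * φ (Real.exp (-k) * x ^ w)‖ := by
            simp only [Real.norm_eq_abs]
            exact hEabs
          have h2 := norm_tsum_le_tsum_norm h1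
          simp only [Real.norm_eq_abs] at h2
          exact h2
      _ = w ^ n * ((∑' k : ↑S, |E (((k : ℤ) : ℝ) / w) * φ (Real.exp (-(k : ℤ)) * x ^ w)|)
            + ∑' k : ↑Sᶜ, |E (((k : ℤ) : ℝ) / w) * φ (Real.exp (-(k : ℤ)) * x ^ w)|) := by
          rw [← hsplit]
      _ = w ^ n * (∑' k : ↑S, |E (((k : ℤ) : ℝ) / w) * φ (Real.exp (-(k : ℤ)) * x ^ w)|)
            + w ^ n * ∑' k : ↑Sᶜ, |E (((k : ℤ) : ℝ) / w) * φ (Real.exp (-(k : ℤ)) * x ^ w)| := by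
          ring
      _ ≤ C * ε' + δ * M := add_le_add hfar_sum hnear_sum
      _ < ε / 2 + ε / 2 := by
          apply add_lt_add_of_lt_of_le hCε hδM
      _ = ε := by ring
  -- conclusion
  have hconst : mellinD^[n] f x / (Nat.factorial n : ℝ) * m n
      = deriv^[n] F L / (n.factorial : ℝ) * m n := by
    congr 2
    rw [hFdef, mellin_iter f n L, hexpL]
  rw [hconst]
  have htend : Tendsto (fun w : ℝ => deriv^[n] F L / (n.factorial : ℝ) * m n
      + w ^ n * ∑' k : ℤ, E ((k : ℝ) / w) * φ (Real.exp (-k) * x ^ w)) atTop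
      (nhds (deriv^[n] F L / (n.factorial : ℝ) * m n)) := by
    have hc : Tendsto (fun _ : ℝ => deriv^[n] F L / (n.factorial : ℝ) * m n) atTop
        (nhds (deriv^[n] F L / (n.factorial : ℝ) * m n)) := tendsto_const_nhds
    simpa using hc.add hρ
  apply htend.congr'
  filter_upwards [eventually_gt_atTop 0] with w hw
  exact (hmain w hw).symm
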